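/- Subject reduction for the many-sorted strategy encoding: over a many-sorted signature (S, F) with sort-preserving rewrite rules, for any strategy Str and context Γ with free strategy variables of Str in the domain of Γ, one step of rewriting with the sorted translation T_S[Γ](Str) ∪ T_S[Γ](Γ) preserves sorts: if t is a well-sorted term of sort s over the extended signature and t rewrites in one step to t', then t' is well-sorted of sort s. -/

import Mathlib

/-- Ground (variable-free) first-order terms over a signature whose symbols
are the elements of `F`. -/
inductive GTerm (F : Type) : Type
  | node : F → List (GTerm F) → GTerm F

/-- First-order terms over symbols `F` and term variables `V`. -/
inductive Tm (F : Type) (V : Type) : Type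
  | var : V → Tm F V
  | node : F → List (Tm F V) → Tm F V

/-- `VarIn v t` : the variable `v` occurs in the term `t`. -/
inductive VarIn {F V : Type} (v : V) : Tm F V → Prop
  | var : VarIn v (.var v)
  | node {f : F} {ts : List (Tm F V)} {t : Tm F V} :
      t ∈ ts → VarIn v t → VarIn v (.node f ts)

/-- Rewriting strategies: identity, failure, a rewrite rule `l → r`
(with `vars r ⊆ vars l`), sequence, left-choice, `one`, `all`,
μ-recursion and strategy variables (from `X`). -/
inductive Strat (F V X : Type) : Type
  | id : Strat F V X
  | fail : Strat F V X
  | rule (l r : Tm F V) (wf : ∀ v, VarIn v r → VarIn v l) : Strat F V X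
  | seq (s₁ s₂ : Strat F V X) : Strat F V X
  | choice (s₁ s₂ : Strat F V X) : Strat F V X
  | one (s : Strat F V X) : Strat F V X
  | all (s : Strat F V X) : Strat F V X
  | mu (x : X) (s : Strat F V X) : Strat F V X
  | var (x : X) : Strat F V X

/-- Application of a (ground) substitution to a term. -/
def substG {F V : Type} (σ : V → GTerm F) : Tm F V → GTerm F
  | .var v => σ v
  | .node f ts => .node f (ts.attach.map (fun t => substG σ t.1))
termination_by t => sizeOf t
decreasing_by
  have := List.sizeOf_lt_of_mem t.2
  simp only [Tm.node.sizeOf_spec]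
  omega

/-- Contexts map strategy variables to strategies. -/
abbrev Ctx (F V X : Type) := X → Option (Strat F V X)

/-- Big-step evaluation judgment `Γ ⊢ [S](t) ⇒ u`; the result `u` is
`some t'` for a ground term `t'`, or `none`, representing `Fail`. -/
inductive Eval {F V X : Type} [DecidableEq X] :
    Ctx F V X → Strat F V X → GTerm F → Option (GTerm F) → Prop
  | id {Γ t} : Eval Γ .id t (some t)
  | fail {Γ t} : Eval Γ .fail t none
  | ruleOk {Γ l r wf} (σ : V → GTerm F) :
      Eval Γ (.rule l r wf) (substG σ l) (some (substG σ r))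
  | ruleFail {Γ l r wf t} : (∀ σ : V → GTerm F, substG σ l ≠ t) →
      Eval Γ (.rule l r wf) t none
  | seqOk {Γ s₁ s₂ t t' u} : Eval Γ s₁ t (some t') → Eval Γ s₂ t' u →
      Eval Γ (.seq s₁ s₂) t u
  | seqFail {Γ s₁ s₂ t} : Eval Γ s₁ t none → Eval Γ (.seq s₁ s₂) t none
  | choiceOk {Γ s₁ s₂ t t'} : Eval Γ s₁ t (some t') →
      Eval Γ (.choice s₁ s₂) t (some t')
  | choiceFail {Γ s₁ s₂ t u} : Eval Γ s₁ t none → Eval Γ s₂ t u →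
      Eval Γ (.choice s₁ s₂) t u
  | mu {Γ x s t u} : Eval (Function.update Γ x (some s)) s t u →
      Eval Γ (.mu x s) t u
  | muvar {Γ x s t u} : Γ x = some s → Eval Γ s t u → Eval Γ (.var x) t u
  | oneOk {Γ s f pre t post t'} :
      (∀ p ∈ pre, Eval Γ s p none) → Eval Γ s t (some t') →
      Eval Γ (.one s) (.node f (pre ++ t :: post))
        (some (.node f (pre ++ t' :: post)))
  | oneFail {Γ s f ts} : (∀ t ∈ ts, Eval Γ s t none) →
      Eval Γ (.one s) (.node f ts) none
  | allOk {Γ s f ts ts'} : ts.length = ts'.length →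
      (∀ p ∈ ts.zip ts', Eval Γ s p.1 (some p.2)) →
      Eval Γ (.all s) (.node f ts) (some (.node f ts'))
  | allFail {Γ s f ts t} : t ∈ ts → Eval Γ s t none →
      Eval Γ (.all s) (.node f ts) none

/-- A strategy `S` is terminating under the context `Γ` if applying it to any
ground term yields some result (a term or `Fail`). -/
def Terminating {F V X : Type} [DecidableEq X] (Γ : Ctx F V X) (S : Strat F V X) : Prop :=
  ∀ t : GTerm F, ∃ u : Option (GTerm F), Eval Γ S t u

/-- Free strategy variables of a strategy. -/
def fvarS {F V X : Type} : Strat F V X → Set X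
  | .var x => {x}
  | .mu x s => fvarS s \ {x}
  | .seq s₁ s₂ => fvarS s₁ ∪ fvarS s₂
  | .choice s₁ s₂ => fvarS s₁ ∪ fvarS s₂
  | .one s => fvarS s
  | .all s => fvarS s
  | .id => ∅
  | .fail => ∅
  | .rule _ _ _ => ∅

/-- The extended signature of the strategy translation: the original symbols
(`base`), the unary failure symbol `⊥` (`bot`), one fresh unary symbol `φ_S`
for every (sub-)strategy `S` and for every strategy variable (`phi`), and the
auxiliary symbols `φ_seq`, `φ_choice`, `ψ_f` (for `all`) and `ψ_f^i`
(for `one`). -/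
inductive ESym (F V X : Type) : Type
  | base (f : F)
  | bot
  | phi (s : Strat F V X)
  | phiSeq (s₁ s₂ : Strat F V X)
  | phiCh (s₁ s₂ : Strat F V X)
  | psiAll (s : Strat F V X) (f : F)
  | psiOne (s : Strat F V X) (f : F) (i : ℕ)

/-- `⊥(t)`. -/
def bt {F V X : Type} (t : GTerm (ESym F V X)) : GTerm (ESym F V X) :=
  .node .bot [t]

/-- `φ_S(t)`. -/
def ph {F V X : Type} (s : Strat F V X) (t : GTerm (ESym F V X)) :
    GTerm (ESym F V X) :=
  .node (.phi s) [t]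

/-- `IsBase ar t` : `t` is (the embedding of) a ground term over the original
signature, i.e. it is built only from `base` symbols, respecting arities.
This is the semantics of the anti-pattern `!⊥(_)`. -/
inductive IsBase {F V X : Type} (ar : F → ℕ) : GTerm (ESym F V X) → Prop
  | node {f : F} {ts : List (GTerm (ESym F V X))} : ts.length = ar f →
      (∀ t ∈ ts, IsBase ar t) → IsBase ar (.node (.base f) ts)

/-- Application of a substitution with values in extended ground terms to a
term of the original signature. -/
def substE {F V X : Type} (σ : V → GTerm (ESym F V X)) :
    Tm F V → GTerm (ESym F V X)
  | .var v => σ v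
  | .node f ts => .node (.base f) (ts.attach.map (fun t => substE σ t.1))
termination_by t => sizeOf t
decreasing_by
  have := List.sizeOf_lt_of_mem t.2
  simp only [Tm.node.sizeOf_spec]
  omega

/-- Ground instances of the rewrite rules of the translation `T[Γ](S)` of a
strategy `S` (Figure 2 of the paper): `SRule ar S a b` holds iff `a → b` is an
instance of a rule generated for `S` or one of its sub-strategies.
Anti-pattern positions (`x@!⊥(_)`, `x@!l`) range over ground terms of the
original signature, plain variables over arbitrary ground terms of the
extended signature. -/
inductive SRule {F V X : Type} (ar : F → ℕ) :
    Strat F V X → GTerm (ESym F V X) → GTerm (ESym F V X) → Prop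
  -- (E1) id
  | idOk {t} : IsBase ar t → SRule ar .id (ph .id t) t
  | idBot {t} : SRule ar .id (ph .id (bt t)) (bt t)
  -- (E2) fail
  | failOk {t} : IsBase ar t → SRule ar .fail (ph .fail t) (bt t)
  | failBot {t} : SRule ar .fail (ph .fail (bt t)) (bt t)
  -- (E3) rewrite rule
  | ruleOk {l r wf} (σ : V → GTerm (ESym F V X)) :
      SRule ar (.rule l r wf) (ph (.rule l r wf) (substE σ l)) (substE σ r)
  | ruleFail {l r wf t} : IsBase ar t →
      (∀ σ : V → GTerm (ESym F V X), substE σ l ≠ t) →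
      SRule ar (.rule l r wf) (ph (.rule l r wf) t) (bt t)
  | ruleBot {l r wf t} :
      SRule ar (.rule l r wf) (ph (.rule l r wf) (bt t)) (bt t)
  -- (E4) sequence
  | seqStart {s₁ s₂ t} : IsBase ar t →
      SRule ar (.seq s₁ s₂) (ph (.seq s₁ s₂) t)
        (.node (.phiSeq s₁ s₂) [ph s₂ (ph s₁ t), t])
  | seqBot {s₁ s₂ t} : SRule ar (.seq s₁ s₂) (ph (.seq s₁ s₂) (bt t)) (bt t)
  | seqOk {s₁ s₂ t u} : IsBase ar t →
      SRule ar (.seq s₁ s₂) (.node (.phiSeq s₁ s₂) [t, u]) t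
  | seqFail {s₁ s₂ t u} :
      SRule ar (.seq s₁ s₂) (.node (.phiSeq s₁ s₂) [bt t, u]) (bt u)
  | seqL {s₁ s₂ a b} : SRule ar s₁ a b → SRule ar (.seq s₁ s₂) a b
  | seqR {s₁ s₂ a b} : SRule ar s₂ a b → SRule ar (.seq s₁ s₂) a b
  -- (E5) choice
  | chStart {s₁ s₂ t} : IsBase ar t →
      SRule ar (.choice s₁ s₂) (ph (.choice s₁ s₂) t)
        (.node (.phiCh s₁ s₂) [ph s₁ t])
  | chBot {s₁ s₂ t} :
      SRule ar (.choice s₁ s₂) (ph (.choice s₁ s₂) (bt t)) (bt t)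
  | chFail {s₁ s₂ t} :
      SRule ar (.choice s₁ s₂) (.node (.phiCh s₁ s₂) [bt t]) (ph s₂ t)
  | chOk {s₁ s₂ t} : IsBase ar t →
      SRule ar (.choice s₁ s₂) (.node (.phiCh s₁ s₂) [t]) t
  | chL {s₁ s₂ a b} : SRule ar s₁ a b → SRule ar (.choice s₁ s₂) a b
  | chR {s₁ s₂ a b} : SRule ar s₂ a b → SRule ar (.choice s₁ s₂) a b
  -- (E6) recursion
  | muStart {x s t} : IsBase ar t →
      SRule ar (.mu x s) (ph (.mu x s) t) (ph s t)
  | muBot {x s t} : SRule ar (.mu x s) (ph (.mu x s) (bt t)) (bt t)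
  | muVarStart {x s t} : IsBase ar t →
      SRule ar (.mu x s) (ph (.var x) t) (ph s t)
  | muVarBot {x s t} : SRule ar (.mu x s) (ph (.var x) (bt t)) (bt t)
  | muSub {x s a b} : SRule ar s a b → SRule ar (.mu x s) a b
  -- (E8) all
  | allBot {s t} : SRule ar (.all s) (ph (.all s) (bt t)) (bt t)
  | allConst {s} {c : F} : ar c = 0 →
      SRule ar (.all s) (ph (.all s) (.node (.base c) []))
        (.node (.base c) [])
  | allStart {s} {f : F} {ts} : 0 < ar f → ts.length = ar f →
      SRule ar (.all s) (ph (.all s) (.node (.base f) ts))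
        (.node (.psiAll s f) (ts.map (ph s) ++ [.node (.base f) ts]))
  | allOk {s} {f : F} {ts u} : 0 < ar f → ts.length = ar f →
      (∀ t ∈ ts, IsBase ar t) →
      SRule ar (.all s) (.node (.psiAll s f) (ts ++ [u])) (.node (.base f) ts)
  | allFail {s} {f : F} {ts u t} : 0 < ar f → ts.length = ar f → bt t ∈ ts →
      SRule ar (.all s) (.node (.psiAll s f) (ts ++ [u])) (bt u)
  | allSub {s a b} : SRule ar s a b → SRule ar (.all s) a b
  -- (E9) one
  | oneBot {s t} : SRule ar (.one s) (ph (.one s) (bt t)) (bt t)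
  | oneConst {s} {c : F} : ar c = 0 →
      SRule ar (.one s) (ph (.one s) (.node (.base c) []))
        (bt (.node (.base c) []))
  | oneStart {s} {f : F} {t ts} : ts.length + 1 = ar f →
      SRule ar (.one s) (ph (.one s) (.node (.base f) (t :: ts)))
        (.node (.psiOne s f 0) (ph s t :: ts))
  | oneOk {s} {f : F} {i : ℕ} {pre post : List (GTerm (ESym F V X))} {t} :
      IsBase ar t → pre.length = i →
      pre.length + 1 + post.length = ar f →
      SRule ar (.one s)
        (.node (.psiOne s f i) (pre.map bt ++ t :: post))
        (.node (.base f) (pre ++ t :: post))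
  | oneNext {s} {f : F} {i : ℕ} {pre post : List (GTerm (ESym F V X))} {t} :
      pre.length = i + 1 →
      pre.length + 1 + post.length = ar f →
      SRule ar (.one s)
        (.node (.psiOne s f i) (pre.map bt ++ t :: post))
        (.node (.psiOne s f (i + 1)) (pre.map bt ++ ph s t :: post))
  | oneLast {s} {f : F} {pre : List (GTerm (ESym F V X))} :
      0 < ar f → pre.length = ar f →
      SRule ar (.one s) (.node (.psiOne s f (ar f - 1)) (pre.map bt))
        (bt (.node (.base f) pre))
  | oneSub {s a b} : SRule ar s a b → SRule ar (.one s) a b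

/-- Ground instances of the rules of the translation `T[Γ](Γ)` of a context:
each binding `X : S` contributes the rules `φ_X(x@!⊥(_)) → φ_S(x)` and
`φ_X(⊥(x)) → ⊥(x)`, together with the rules of the translation of `S`. -/
inductive CRule {F V X : Type} (ar : F → ℕ) (Γ : Ctx F V X) :
    GTerm (ESym F V X) → GTerm (ESym F V X) → Prop
  | varStart {x s t} : Γ x = some s → IsBase ar t →
      CRule ar Γ (ph (.var x) t) (ph s t)
  | varBot {x s t} : Γ x = some s → CRule ar Γ (ph (.var x) (bt t)) (bt t)
  | sub {x s a b} : Γ x = some s → SRule ar s a b → CRule ar Γ a b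

/-- The (ground instances of the) rules of `T[Γ](S) ∪ T[Γ](Γ)`. -/
def ERule {F V X : Type} (ar : F → ℕ) (Γ : Ctx F V X) (S : Strat F V X)
    (a b : GTerm (ESym F V X)) : Prop :=
  SRule ar S a b ∨ CRule ar Γ a b

/-- One-step rewriting with a set of ground rule instances `R`, at any
position. -/
inductive Red {E : Type} (R : GTerm E → GTerm E → Prop) :
    GTerm E → GTerm E → Prop
  | root {a b} : R a b → Red R a b
  | sub {f : E} {pre post : List (GTerm E)} {t t'} : Red R t t' →
      Red R (.node f (pre ++ t :: post)) (.node f (pre ++ t' :: post))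

/-- Many-step rewriting. -/
def Reds {E : Type} (R : GTerm E → GTerm E → Prop) :
    GTerm E → GTerm E → Prop :=
  Relation.ReflTransGen (Red R)

/-- Confluence of a rewrite relation. -/
def Confluent {E : Type} (R : GTerm E → GTerm E → Prop) : Prop :=
  ∀ a b c : GTerm E, Reds R a b → Reds R a c → ∃ d, Reds R b d ∧ Reds R c d

/-! ### Many-sorted signatures and the sorted translation -/

/-- Arity of a symbol of a many-sorted signature with domain function `dom`. -/
def arOf {Srt F : Type} (dom : F → List Srt) : F → ℕ := fun f => (dom f).length

/-- Sorting judgment for terms with variables over a many-sorted signature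
`(Srt, F)` with profiles `dom f → cod f` and sorted variables (`vs`). -/
inductive HasSortT {Srt F V : Type} (dom : F → List Srt) (cod : F → Srt)
    (vs : V → Srt) : Tm F V → Srt → Prop
  | var {v} : HasSortT dom cod vs (.var v) (vs v)
  | node {f : F} {ts : List (Tm F V)} : ts.length = (dom f).length →
      (∀ p ∈ ts.zip (dom f), HasSortT dom cod vs p.1 p.2) →
      HasSortT dom cod vs (.node f ts) (cod f)

/-- Sorting judgment for ground terms over the extended signature of the
sorted translation.  A base symbol `f` has profile `dom f → cod f`; the
symbols `⊥`, `φ_S`, `φ_X` and `φ_choice` have (overloaded) profile `s → s`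
for every sort `s`; `φ_seq` has profile `s × s → s` for every sort `s`;
`ψ_f` has profile `dom f × cod f → cod f` and `ψ_f^i` profile
`dom f → cod f`. -/
inductive HasSortE {Srt F V X : Type} (dom : F → List Srt) (cod : F → Srt) :
    GTerm (ESym F V X) → Srt → Prop
  | base {f : F} {ts : List (GTerm (ESym F V X))} :
      ts.length = (dom f).length →
      (∀ p ∈ ts.zip (dom f), HasSortE dom cod p.1 p.2) →
      HasSortE dom cod (.node (.base f) ts) (cod f)
  | bot {t s} : HasSortE dom cod t s → HasSortE dom cod (bt t) s
  | phi {S : Strat F V X} {t s} : HasSortE dom cod t s →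
      HasSortE dom cod (ph S t) s
  | phiSeq {s₁ s₂ : Strat F V X} {a b s} : HasSortE dom cod a s →
      HasSortE dom cod b s →
      HasSortE dom cod (.node (.phiSeq s₁ s₂) [a, b]) s
  | phiCh {s₁ s₂ : Strat F V X} {a s} : HasSortE dom cod a s →
      HasSortE dom cod (.node (.phiCh s₁ s₂) [a]) s
  | psiAll {S : Strat F V X} {f : F} {ts : List (GTerm (ESym F V X))} {u} :
      ts.length = (dom f).length →
      (∀ p ∈ ts.zip (dom f), HasSortE dom cod p.1 p.2) →
      HasSortE dom cod u (cod f) →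
      HasSortE dom cod (.node (.psiAll S f) (ts ++ [u])) (cod f)
  | psiOne {S : Strat F V X} {f : F} {i : ℕ}
      {ts : List (GTerm (ESym F V X))} :
      ts.length = (dom f).length →
      (∀ p ∈ ts.zip (dom f), HasSortE dom cod p.1 p.2) →
      HasSortE dom cod (.node (.psiOne S f i) ts) (cod f)

/-- Well-sorted strategies: all the rewrite rules they contain are
sort-preserving (left- and right-hand sides well-sorted of the same sort). -/
inductive WSStrat {Srt F V X : Type} (dom : F → List Srt) (cod : F → Srt)
    (vs : V → Srt) : Strat F V X → Prop
  | id : WSStrat dom cod vs .id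
  | fail : WSStrat dom cod vs .fail
  | rule {l r wf s} : HasSortT dom cod vs l s → HasSortT dom cod vs r s →
      WSStrat dom cod vs (.rule l r wf)
  | seq {s₁ s₂} : WSStrat dom cod vs s₁ → WSStrat dom cod vs s₂ →
      WSStrat dom cod vs (.seq s₁ s₂)
  | choice {s₁ s₂} : WSStrat dom cod vs s₁ → WSStrat dom cod vs s₂ →
      WSStrat dom cod vs (.choice s₁ s₂)
  | one {s} : WSStrat dom cod vs s → WSStrat dom cod vs (.one s)
  | all {s} : WSStrat dom cod vs s → WSStrat dom cod vs (.all s)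
  | mu {x s} : WSStrat dom cod vs s → WSStrat dom cod vs (.mu x s)
  | var {x} : WSStrat dom cod vs (.var x)

/-- Ground instances of the rules of the *sorted* translation `T_S[Γ](S)`:
the rule schemas are the same as in the unsorted case but the sorted
anti-patterns `!_s ⊥_s(_)` and `!_s l` range over well-sorted ground terms of
the original signature of sort `s`, and variables are instantiated by sorted
substitutions. -/
inductive SRuleS {Srt F V X : Type} (dom : F → List Srt) (cod : F → Srt)
    (vs : V → Srt) :
    Strat F V X → GTerm (ESym F V X) → GTerm (ESym F V X) → Prop
  -- (SE1) id
  | idOk {t s} : IsBase (arOf dom) t → HasSortE dom cod t s →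
      SRuleS dom cod vs .id (ph .id t) t
  | idBot {t s} : HasSortE dom cod t s →
      SRuleS dom cod vs .id (ph .id (bt t)) (bt t)
  -- (SE2) fail
  | failOk {t s} : IsBase (arOf dom) t → HasSortE dom cod t s →
      SRuleS dom cod vs .fail (ph .fail t) (bt t)
  | failBot {t s} : HasSortE dom cod t s →
      SRuleS dom cod vs .fail (ph .fail (bt t)) (bt t)
  -- (SE3) rewrite rule
  | ruleOk {l r wf} (σ : V → GTerm (ESym F V X)) :
      (∀ v, HasSortE dom cod (σ v) (vs v)) →
      SRuleS dom cod vs (.rule l r wf)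
        (ph (.rule l r wf) (substE σ l)) (substE σ r)
  | ruleFail {l r wf t s} : IsBase (arOf dom) t → HasSortE dom cod t s →
      (∀ σ : V → GTerm (ESym F V X),
        (∀ v, HasSortE dom cod (σ v) (vs v)) → substE σ l ≠ t) →
      SRuleS dom cod vs (.rule l r wf) (ph (.rule l r wf) t) (bt t)
  | ruleBot {l r wf t s} : HasSortE dom cod t s →
      SRuleS dom cod vs (.rule l r wf) (ph (.rule l r wf) (bt t)) (bt t)
  -- (SE4) sequence
  | seqStart {s₁ s₂ t s} : IsBase (arOf dom) t → HasSortE dom cod t s →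
      SRuleS dom cod vs (.seq s₁ s₂) (ph (.seq s₁ s₂) t)
        (.node (.phiSeq s₁ s₂) [ph s₂ (ph s₁ t), t])
  | seqBot {s₁ s₂ t s} : HasSortE dom cod t s →
      SRuleS dom cod vs (.seq s₁ s₂) (ph (.seq s₁ s₂) (bt t)) (bt t)
  | seqOk {s₁ s₂ t u s} : IsBase (arOf dom) t → HasSortE dom cod t s →
      HasSortE dom cod u s →
      SRuleS dom cod vs (.seq s₁ s₂) (.node (.phiSeq s₁ s₂) [t, u]) t
  | seqFail {s₁ s₂ t u s} : HasSortE dom cod t s → HasSortE dom cod u s →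
      SRuleS dom cod vs (.seq s₁ s₂) (.node (.phiSeq s₁ s₂) [bt t, u]) (bt u)
  | seqL {s₁ s₂ a b} : SRuleS dom cod vs s₁ a b →
      SRuleS dom cod vs (.seq s₁ s₂) a b
  | seqR {s₁ s₂ a b} : SRuleS dom cod vs s₂ a b →
      SRuleS dom cod vs (.seq s₁ s₂) a b
  -- (SE5) choice
  | chStart {s₁ s₂ t s} : IsBase (arOf dom) t → HasSortE dom cod t s →
      SRuleS dom cod vs (.choice s₁ s₂) (ph (.choice s₁ s₂) t)
        (.node (.phiCh s₁ s₂) [ph s₁ t])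
  | chBot {s₁ s₂ t s} : HasSortE dom cod t s →
      SRuleS dom cod vs (.choice s₁ s₂) (ph (.choice s₁ s₂) (bt t)) (bt t)
  | chFail {s₁ s₂ t s} : HasSortE dom cod t s →
      SRuleS dom cod vs (.choice s₁ s₂) (.node (.phiCh s₁ s₂) [bt t])
        (ph s₂ t)
  | chOk {s₁ s₂ t s} : IsBase (arOf dom) t → HasSortE dom cod t s →
      SRuleS dom cod vs (.choice s₁ s₂) (.node (.phiCh s₁ s₂) [t]) t
  | chL {s₁ s₂ a b} : SRuleS dom cod vs s₁ a b →
      SRuleS dom cod vs (.choice s₁ s₂) a b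
  | chR {s₁ s₂ a b} : SRuleS dom cod vs s₂ a b →
      SRuleS dom cod vs (.choice s₁ s₂) a b
  -- (SE6) recursion
  | muStart {x s t srt} : IsBase (arOf dom) t → HasSortE dom cod t srt →
      SRuleS dom cod vs (.mu x s) (ph (.mu x s) t) (ph s t)
  | muBot {x s t srt} : HasSortE dom cod t srt →
      SRuleS dom cod vs (.mu x s) (ph (.mu x s) (bt t)) (bt t)
  | muVarStart {x s t srt} : IsBase (arOf dom) t → HasSortE dom cod t srt →
      SRuleS dom cod vs (.mu x s) (ph (.var x) t) (ph s t)
  | muVarBot {x s t srt} : HasSortE dom cod t srt →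
      SRuleS dom cod vs (.mu x s) (ph (.var x) (bt t)) (bt t)
  | muSub {x s a b} : SRuleS dom cod vs s a b →
      SRuleS dom cod vs (.mu x s) a b
  -- (SE8) all
  | allBot {s t srt} : HasSortE dom cod t srt →
      SRuleS dom cod vs (.all s) (ph (.all s) (bt t)) (bt t)
  | allConst {s} {c : F} : dom c = [] →
      SRuleS dom cod vs (.all s) (ph (.all s) (.node (.base c) []))
        (.node (.base c) [])
  | allStart {s} {f : F} {ts : List (GTerm (ESym F V X))} :
      0 < (dom f).length → ts.length = (dom f).length →
      (∀ p ∈ ts.zip (dom f), HasSortE dom cod p.1 p.2) →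
      SRuleS dom cod vs (.all s) (ph (.all s) (.node (.base f) ts))
        (.node (.psiAll s f) (ts.map (ph s) ++ [.node (.base f) ts]))
  | allOk {s} {f : F} {ts : List (GTerm (ESym F V X))} {u} :
      0 < (dom f).length → ts.length = (dom f).length →
      (∀ p ∈ ts.zip (dom f), HasSortE dom cod p.1 p.2) →
      (∀ t ∈ ts, IsBase (arOf dom) t) → HasSortE dom cod u (cod f) →
      SRuleS dom cod vs (.all s) (.node (.psiAll s f) (ts ++ [u]))
        (.node (.base f) ts)
  | allFail {s} {f : F} {ts : List (GTerm (ESym F V X))} {u t} :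
      0 < (dom f).length → ts.length = (dom f).length →
      (∀ p ∈ ts.zip (dom f), HasSortE dom cod p.1 p.2) →
      HasSortE dom cod u (cod f) → bt t ∈ ts →
      SRuleS dom cod vs (.all s) (.node (.psiAll s f) (ts ++ [u])) (bt u)
  | allSub {s a b} : SRuleS dom cod vs s a b →
      SRuleS dom cod vs (.all s) a b
  -- (SE9) one
  | oneBot {s t srt} : HasSortE dom cod t srt →
      SRuleS dom cod vs (.one s) (ph (.one s) (bt t)) (bt t)
  | oneConst {s} {c : F} : dom c = [] →
      SRuleS dom cod vs (.one s) (ph (.one s) (.node (.base c) []))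
        (bt (.node (.base c) []))
  | oneStart {s} {f : F} {t : GTerm (ESym F V X)}
      {ts : List (GTerm (ESym F V X))} :
      ts.length + 1 = (dom f).length →
      (∀ p ∈ (t :: ts).zip (dom f), HasSortE dom cod p.1 p.2) →
      SRuleS dom cod vs (.one s) (ph (.one s) (.node (.base f) (t :: ts)))
        (.node (.psiOne s f 0) (ph s t :: ts))
  | oneOk {s} {f : F} {i : ℕ} {pre post : List (GTerm (ESym F V X))} {t} :
      IsBase (arOf dom) t → pre.length = i →
      pre.length + 1 + post.length = (dom f).length →
      (∀ p ∈ (pre ++ t :: post).zip (dom f), HasSortE dom cod p.1 p.2) →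
      SRuleS dom cod vs (.one s)
        (.node (.psiOne s f i) (pre.map bt ++ t :: post))
        (.node (.base f) (pre ++ t :: post))
  | oneNext {s} {f : F} {i : ℕ} {pre post : List (GTerm (ESym F V X))} {t} :
      pre.length = i + 1 →
      pre.length + 1 + post.length = (dom f).length →
      (∀ p ∈ (pre ++ t :: post).zip (dom f), HasSortE dom cod p.1 p.2) →
      SRuleS dom cod vs (.one s)
        (.node (.psiOne s f i) (pre.map bt ++ t :: post))
        (.node (.psiOne s f (i + 1)) (pre.map bt ++ ph s t :: post))
  | oneLast {s} {f : F} {pre : List (GTerm (ESym F V X))} :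
      0 < (dom f).length → pre.length = (dom f).length →
      (∀ p ∈ pre.zip (dom f), HasSortE dom cod p.1 p.2) →
      SRuleS dom cod vs (.one s)
        (.node (.psiOne s f ((dom f).length - 1)) (pre.map bt))
        (bt (.node (.base f) pre))
  | oneSub {s a b} : SRuleS dom cod vs s a b →
      SRuleS dom cod vs (.one s) a b

/-- Ground instances of the rules of the sorted translation `T_S[Γ](Γ)` of a
context. -/
inductive CRuleS {Srt F V X : Type} (dom : F → List Srt) (cod : F → Srt)
    (vs : V → Srt) (Γ : Ctx F V X) :
    GTerm (ESym F V X) → GTerm (ESym F V X) → Prop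
  | varStart {x s t srt} : Γ x = some s → IsBase (arOf dom) t →
      HasSortE dom cod t srt → CRuleS dom cod vs Γ (ph (.var x) t) (ph s t)
  | varBot {x s t srt} : Γ x = some s → HasSortE dom cod t srt →
      CRuleS dom cod vs Γ (ph (.var x) (bt t)) (bt t)
  | sub {x s a b} : Γ x = some s → SRuleS dom cod vs s a b →
      CRuleS dom cod vs Γ a b

/-- The (ground instances of the) rules of `T_S[Γ](S) ∪ T_S[Γ](Γ)`. -/
def ERuleS {Srt F V X : Type} (dom : F → List Srt) (cod : F → Srt)
    (vs : V → Srt) (Γ : Ctx F V X) (S : Strat F V X)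
    (a b : GTerm (ESym F V X)) : Prop :=
  SRuleS dom cod vs S a b ∨ CRuleS dom cod vs Γ a b

section Aux

variable {Srt F V X : Type} {dom : F → List Srt} {cod : F → Srt} {vs : V → Srt}

theorem bt_eq (t : GTerm (ESym F V X)) : bt t = .node .bot [t] := rfl
theorem ph_eq (S : Strat F V X) (t : GTerm (ESym F V X)) :
    ph S t = .node (.phi S) [t] := rfl

theorem substE_node (σ : V → GTerm (ESym F V X)) (f : F) (ts : List (Tm F V)) :
    substE σ (.node f ts) = .node (.base f) (ts.map (substE σ)) := by
  rw [substE]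
  simp [List.attach_map_val]

theorem invPh {S : Strat F V X} {t s} (h : HasSortE dom cod (ph S t) s) :
    HasSortE dom cod t s := by cases h; assumption

theorem invBt {t : GTerm (ESym F V X)} {s} (h : HasSortE dom cod (bt t) s) :
    HasSortE dom cod t s := by cases h; assumption

theorem invBase {f : F} {ts : List (GTerm (ESym F V X))} {s}
    (h : HasSortE dom cod (.node (.base f) ts) s) :
    s = cod f ∧ ts.length = (dom f).length ∧
      ∀ p ∈ ts.zip (dom f), HasSortE dom cod p.1 p.2 := by
  cases h; exact ⟨rfl, ‹_›, ‹_›⟩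

theorem invPsiOne {S : Strat F V X} {f i ts s}
    (h : HasSortE dom cod (.node (.psiOne S f i) ts) s) : s = cod f := by
  cases h; rfl

theorem invPsiAll {S : Strat F V X} {f L s}
    (h : HasSortE dom cod (.node (.psiAll S f) L) s) : s = cod f := by
  cases h; rfl

theorem substE_var (σ : V → GTerm (ESym F V X)) (v : V) :
    substE σ (.var v) = σ v := by rw [substE]

/-- Sorts are unique. -/
theorem sortU {t : GTerm (ESym F V X)} {s s' : Srt}
    (h : HasSortE dom cod t s) (h' : HasSortE dom cod t s') : s = s' := by
  induction h generalizing s' with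
  | base _ _ => exact (invBase h').1.symm
  | bot _ ih => exact ih (invBt h')
  | phi _ ih => exact ih (invPh h')
  | phiSeq _ _ ih _ => cases h'; exact ih ‹_›
  | phiCh _ ih => cases h'; exact ih ‹_›
  | psiAll _ _ _ _ _ => exact (invPsiAll h').symm
  | psiOne _ _ => exact (invPsiOne h').symm

/-- Sorted substitution preserves sorts. -/
theorem substE_sort {σ : V → GTerm (ESym F V X)}
    (hσ : ∀ v, HasSortE dom cod (σ v) (vs v)) {l : Tm F V} {s : Srt}
    (h : HasSortT dom cod vs l s) : HasSortE dom cod (substE σ l) s := by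
  induction h with
  | var => rw [substE_var]; exact hσ _
  | @node f ts hlen _ ih =>
    rw [substE_node]
    refine .base (by simp [hlen]) ?_
    intro p hp
    rw [List.zip_map_left] at hp
    obtain ⟨q, hq, rfl⟩ := List.mem_map.1 hp
    exact ih q hq

/-- Replacing one element of a list by a term with the same sorts preserves
zip-sortedness. -/
theorem zipCongr {u u' : GTerm (ESym F V X)}
    (hr : ∀ s₀, HasSortE dom cod u s₀ → HasSortE dom cod u' s₀) :
    ∀ (pre : List (GTerm (ESym F V X))) (ds : List Srt) post,
      (∀ p ∈ (pre ++ u :: post).zip ds, HasSortE dom cod p.1 p.2) →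
      ∀ p ∈ (pre ++ u' :: post).zip ds, HasSortE dom cod p.1 p.2 := by
  intro pre
  induction pre with
  | nil =>
    intro ds post h p hp
    cases ds with
    | nil => simp at hp
    | cons d ds =>
      simp only [List.nil_append, List.zip_cons_cons, List.mem_cons] at hp h
      rcases hp with rfl | hp
      · exact hr d (h _ (Or.inl rfl))
      · exact h p (Or.inr hp)
  | cons q pre ih =>
    intro ds post h p hp
    cases ds with
    | nil => simp at hp
    | cons d ds =>
      simp only [List.cons_append, List.zip_cons_cons, List.mem_cons] at hp h
      rcases hp with rfl | hp
      · exact h _ (Or.inl rfl)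
      · exact ih ds post (fun p hp => h p (Or.inr hp)) p hp

/-- Mapping `⊥` over a prefix preserves zip-sortedness. -/
theorem zipMapBt {u : GTerm (ESym F V X)} :
    ∀ (pre : List (GTerm (ESym F V X))) (ds : List Srt) post,
      (∀ p ∈ (pre ++ u :: post).zip ds, HasSortE dom cod p.1 p.2) →
      ∀ p ∈ (pre.map bt ++ u :: post).zip ds, HasSortE dom cod p.1 p.2 := by
  intro pre
  induction pre with
  | nil => intro ds post h; simpa using h
  | cons q pre ih =>
    intro ds post h p hp
    cases ds with
    | nil => simp at hp
    | cons d ds =>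
      simp only [List.cons_append, List.map_cons, List.zip_cons_cons,
        List.mem_cons] at hp h
      rcases hp with rfl | hp
      · exact .bot (h _ (Or.inl rfl))
      · exact ih ds post (fun p hp => h p (Or.inr hp)) p hp

theorem zipMapPh {S : Strat F V X} {ts : List (GTerm (ESym F V X))}
    {ds : List Srt}
    (h : ∀ p ∈ ts.zip ds, HasSortE dom cod p.1 p.2) :
    ∀ p ∈ (ts.map (ph S)).zip ds, HasSortE dom cod p.1 p.2 := by
  intro p hp
  rw [List.zip_map_left] at hp
  obtain ⟨q, hq, rfl⟩ := List.mem_map.1 hp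
  exact .phi (h q hq)

/-- Single-rule subject reduction for `SRuleS`. -/
theorem srule_pres {S : Strat F V X} {a b}
    (hruleS : SRuleS dom cod vs S a b) :
    ∀ s, WSStrat dom cod vs S → HasSortE dom cod a s →
      HasSortE dom cod b s := by
  induction hruleS with
  | idOk _ _ => exact fun s _ ha => invPh ha
  | idBot _ => exact fun s _ ha => invPh ha
  | failOk _ _ => exact fun s _ ha => .bot (invPh ha)
  | failBot _ => exact fun s _ ha => invPh ha
  | @ruleOk l r wf σ hσ =>
    intro s hS ha
    cases hS with
    | rule hl hr =>
      have h1 : HasSortE dom cod (substE σ l) _ := substE_sort hσ hl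
      have h2 := substE_sort hσ hr
      have := sortU (invPh ha) h1
      subst this; exact h2
  | ruleFail _ _ _ => exact fun s _ ha => .bot (invPh ha)
  | ruleBot _ => exact fun s _ ha => invPh ha
  | seqStart _ _ =>
    exact fun s _ ha => .phiSeq (.phi (.phi (invPh ha))) (invPh ha)
  | seqBot _ => exact fun s _ ha => invPh ha
  | seqOk _ _ _ =>
    intro s _ ha; cases ha; assumption
  | seqFail _ _ =>
    intro s _ ha; cases ha with
    | phiSeq h1 h2 => exact .bot h2
  | seqL _ ih => intro s hS ha; cases hS with | seq h1 h2 => exact ih s h1 ha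
  | seqR _ ih => intro s hS ha; cases hS with | seq h1 h2 => exact ih s h2 ha
  | chStart _ _ => exact fun s _ ha => .phiCh (.phi (invPh ha))
  | chBot _ => exact fun s _ ha => invPh ha
  | chFail _ =>
    intro s _ ha; cases ha with
    | phiCh h1 => exact .phi (invBt h1)
  | chOk _ _ => intro s _ ha; cases ha; assumption
  | chL _ ih =>
    intro s hS ha; cases hS with | choice h1 h2 => exact ih s h1 ha
  | chR _ ih =>
    intro s hS ha; cases hS with | choice h1 h2 => exact ih s h2 ha
  | muStart _ _ => exact fun s _ ha => .phi (invPh ha)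
  | muBot _ => exact fun s _ ha => invPh ha
  | muVarStart _ _ => exact fun s _ ha => .phi (invPh ha)
  | muVarBot _ => exact fun s _ ha => invPh ha
  | muSub _ ih => intro s hS ha; cases hS with | mu h1 => exact ih s h1 ha
  | allBot _ => exact fun s _ ha => invPh ha
  | allConst _ => exact fun s _ ha => invPh ha
  | @allStart s' f ts _ hlen hsorted =>
    intro s _ ha
    obtain ⟨rfl, hlen', hz⟩ := invBase (invPh ha)
    exact .psiAll (by simp [hlen]) (zipMapPh hz) (invPh ha)
  | @allOk s' f ts u _ hlen hsorted hbase hu =>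
    intro s _ ha
    have := invPsiAll ha; subst this
    exact .base hlen hsorted
  | @allFail s' f ts u t _ hlen hsorted hu hmem =>
    intro s _ ha
    have := invPsiAll ha; subst this
    exact .bot hu
  | allSub _ ih => intro s hS ha; cases hS with | all h1 => exact ih s h1 ha
  | oneBot _ => exact fun s _ ha => invPh ha
  | oneConst _ => exact fun s _ ha => .bot (invPh ha)
  | @oneStart s' f t ts hlen hsorted =>
    intro s _ ha
    obtain ⟨rfl, hlen', hz⟩ := invBase (invPh ha)
    refine .psiOne (by simpa using hlen) ?_
    exact zipCongr (fun s₀ h => .phi h) [] (dom f) ts hsorted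
  | @oneOk s' f i pre post t hbase hi hlen hsorted =>
    intro s _ ha
    have := invPsiOne ha; subst this
    exact .base (by simp; omega) hsorted
  | @oneNext s' f i pre post t hi hlen hsorted =>
    intro s _ ha
    have := invPsiOne ha; subst this
    refine .psiOne (by simp; omega) ?_
    exact zipMapBt pre (dom f) post
      (zipCongr (fun s₀ h => .phi h) pre (dom f) post hsorted)
  | @oneLast s' f pre hpos hlen hsorted =>
    intro s _ ha
    have := invPsiOne ha; subst this
    exact .bot (.base hlen hsorted)
  | oneSub _ ih => intro s hS ha; cases hS with | one h1 => exact ih s h1 ha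

/-- Single-rule subject reduction for `CRuleS`. -/
theorem crule_pres {Γ : Ctx F V X} {a b}
    (hΓ : ∀ x s', Γ x = some s' → WSStrat dom cod vs s')
    (h : CRuleS dom cod vs Γ a b) {s}
    (ha : HasSortE dom cod a s) : HasSortE dom cod b s := by
  cases h with
  | varStart _ _ _ => exact .phi (invPh ha)
  | varBot _ _ => exact invPh ha
  | sub hx hr => exact srule_pres hr s (hΓ _ _ hx) ha

/-- Sort preservation is a congruence w.r.t. one-hole contexts. -/
theorem nodeCongr {g : ESym F V X} {pre post : List (GTerm (ESym F V X))}
    {u u' : GTerm (ESym F V X)} {s : Srt}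
    (hr : ∀ s₀, HasSortE dom cod u s₀ → HasSortE dom cod u' s₀)
    (h : HasSortE dom cod (.node g (pre ++ u :: post)) s) :
    HasSortE dom cod (.node g (pre ++ u' :: post)) s := by
  generalize hL : pre ++ u :: post = L at h
  cases h with
  | base hlen hz =>
    subst hL
    exact .base (by simpa using hlen) (zipCongr hr pre _ post hz)
  | @bot t _ ht =>
    rcases pre with _ | ⟨x, pre⟩
    · simp only [List.nil_append, List.cons.injEq] at hL
      obtain ⟨rfl, rfl⟩ := hL
      exact .bot (hr _ ht)
    · simp at hL
  | @phi S t _ ht =>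
    rcases pre with _ | ⟨x, pre⟩
    · simp only [List.nil_append, List.cons.injEq] at hL
      obtain ⟨rfl, rfl⟩ := hL
      exact .phi (hr _ ht)
    · simp at hL
  | @phiSeq s₁ s₂ a b _ hA hB =>
    rcases pre with _ | ⟨x, _ | ⟨y, pre⟩⟩
    · simp only [List.nil_append, List.cons.injEq] at hL
      obtain ⟨rfl, rfl⟩ := hL
      exact .phiSeq (hr _ hA) hB
    · simp only [List.cons_append, List.nil_append, List.cons.injEq] at hL
      obtain ⟨rfl, rfl, rfl⟩ := hL
      exact .phiSeq hA (hr _ hB)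
    · simp at hL
  | @phiCh s₁ s₂ a _ hA =>
    rcases pre with _ | ⟨x, pre⟩
    · simp only [List.nil_append, List.cons.injEq] at hL
      obtain ⟨rfl, rfl⟩ := hL
      exact .phiCh (hr _ hA)
    · simp at hL
  | @psiAll S f ts w hlen hz hw =>
    rcases post.eq_nil_or_concat with rfl | ⟨q, a, rfl⟩
    · obtain ⟨rfl, h3⟩ : pre = ts ∧ ([u] : List _) = [w] :=
        List.append_inj' hL rfl
      injection h3 with h3; subst h3
      exact .psiAll hlen hz (hr _ hw)
    · have heq2 : (pre ++ u :: q) ++ [a] = ts ++ [w] := by simpa using hL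
      obtain ⟨h4, h3⟩ : pre ++ u :: q = ts ∧ ([a] : List _) = [w] :=
        List.append_inj' heq2 rfl
      subst h4
      injection h3 with h3; subst h3
      have goal : HasSortE dom cod
          (.node (.psiAll S f) ((pre ++ u' :: q) ++ [a])) (cod f) :=
        .psiAll (by simpa using hlen) (zipCongr hr pre _ q hz) hw
      simpa using goal
  | psiOne hlen hz =>
    subst hL
    exact .psiOne (by simpa using hlen) (zipCongr hr pre _ post hz)

end Aux

/-- subject reduction for the many-sorted strategy encoding:
one step of rewriting with the sorted translation `T_S[Γ](S) ∪ T_S[Γ](Γ)`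
preserves sorts. -/
theorem sorted_encoding_subject_reduction {Srt F V X : Type}
    (dom : F → List Srt) (cod : F → Srt) (vs : V → Srt)
    (S : Strat F V X) (Γ : Ctx F V X)
    (hS : WSStrat dom cod vs S)
    (hΓ : ∀ x s', Γ x = some s' → WSStrat dom cod vs s')
    (hfv : ∀ x ∈ fvarS S, ∃ s', Γ x = some s')
    (t t' : GTerm (ESym F V X)) (s : Srt)
    (ht : HasSortE dom cod t s)
    (hred : Red (ERuleS dom cod vs Γ S) t t') :
    HasSortE dom cod t' s := by
  clear hfv
  revert s
  induction hred with
  | root hR =>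
    intro s ht
    rcases hR with h | h
    · exact srule_pres h s hS ht
    · exact crule_pres hΓ h ht
  | sub _ ih =>
    intro s ht
    exact nodeCongr ih ht
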